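/- Let (X,φ) be a Smale space and let x ∈ X be an asymptotic p-periodic point for some p ∈ ℤ with p ≠ 0. Let p_s be the least positive asymptotic period of η^s(x) and p_u the least positive asymptotic period of η^u(x). Then: (i) (φ^{p_s}(x), x) ∈ G_φ^s; (ii) (φ^{p_u}(x), x) ∈ G_φ^u; (iii) if p is the least positive asymptotic period of x, then p = lcm(p_u, p_s), the least common multiple of p_u and p_s. -/

import Mathlib

open Filter Set Topology

noncomputable section

/-- Integer iterate of a homeomorphism. -/
def hIter {X : Type*} [TopologicalSpace X] (φ : X ≃ₜ X) (n : ℤ) (x : X) : X :=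
  ((φ.toEquiv : Equiv.Perm X) ^ n) x

/-- The cocycle sums `f^n` of a function `f : X → ℤ` along the iterates of `φ`:
`f^n(x) = Σ_{i=0}^{n-1} f(φ^i(x))` for `n > 0`, `f^0 = 0`, and
`f^n(x) = −Σ_{i=n}^{-1} f(φ^i(x))` for `n < 0`. -/
def cSum {X : Type*} [TopologicalSpace X] (φ : X ≃ₜ X) (f : X → ℤ) (n : ℤ) (x : X) : ℤ :=
  if 0 ≤ n then ∑ i ∈ Finset.range n.toNat, f (hIter φ i x)
  else -∑ i ∈ Finset.range (-n).toNat, f (hIter φ (n + i) x)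

/-- Stable asymptotic pairs (limit definition). -/
def asympS {X : Type*} [MetricSpace X] (φ : X ≃ₜ X) : Set (X × X) :=
  {p | Tendsto (fun n : ℕ => dist (hIter φ n p.1) (hIter φ n p.2)) atTop (nhds 0)}

/-- Unstable asymptotic pairs (limit definition). -/
def asympU {X : Type*} [MetricSpace X] (φ : X ≃ₜ X) : Set (X × X) :=
  {p | Tendsto (fun n : ℕ => dist (hIter φ (-(n : ℤ)) p.1) (hIter φ (-(n : ℤ)) p.2))
    atTop (nhds 0)}

/-- Asymptotic pairs (limit definition). -/
def asympA {X : Type*} [MetricSpace X] (φ : X ≃ₜ X) : Set (X × X) := asympS φ ∩ asympU φ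

/-- The `ω`-limit set of `x`. -/
def omegaSet {X : Type*} [MetricSpace X] (φ : X ≃ₜ X) (x : X) : Set X :=
  {z | ∃ n : ℕ → ℕ, StrictMono n ∧ Tendsto (fun i => hIter φ (n i) x) atTop (nhds z)}

/-- The `α`-limit set of `x`. -/
def alphaSet {X : Type*} [MetricSpace X] (φ : X ≃ₜ X) (x : X) : Set X :=
  {z | ∃ n : ℕ → ℤ, StrictAnti n ∧ Tendsto (fun i => hIter φ (n i) x) atTop (nhds z)}

/-- A Smale space structure on a compact metric space `X`. -/
structure SmaleSpace (X : Type*) [MetricSpace X] [CompactSpace X] where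
  phi : X ≃ₜ X
  eps : ℝ
  lam : ℝ
  br : X → X → X
  eps_pos : 0 < eps
  lam_pos : 0 < lam
  lam_lt_one : lam < 1
  br_cont : ContinuousOn (fun p : X × X => br p.1 p.2) {p : X × X | dist p.1 p.2 < eps}
  br_self : ∀ x : X, br x x = x
  br_assoc_left : ∀ x y z : X, dist x y < eps → dist (br x y) z < eps → dist x z < eps →
    br (br x y) z = br x z
  br_assoc_right : ∀ x y z : X, dist y z < eps → dist x (br y z) < eps → dist x z < eps →
    br x (br y z) = br x z
  phi_br : ∀ x y : X, dist x y < eps → dist (phi x) (phi y) < eps →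
    phi (br x y) = br (phi x) (phi y)
  contract_s : ∀ x y z : X, br y x = y → dist x y < eps → br z x = z → dist x z < eps →
    dist (phi y) (phi z) ≤ lam * dist y z
  contract_u : ∀ x y z : X, br x y = y → dist x y < eps → br x z = z → dist x z < eps →
    dist (phi.symm y) (phi.symm z) ≤ lam * dist y z

namespace SmaleSpace

variable {X Y : Type*} [MetricSpace X] [CompactSpace X] [MetricSpace Y] [CompactSpace Y]

/-- Local stable set `X^s(x,ε)`. -/
def Xs (S : SmaleSpace X) (x : X) (ε : ℝ) : Set X := {y | S.br y x = y ∧ dist x y < ε}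

/-- Local unstable set `X^u(x,ε)`. -/
def Xu (S : SmaleSpace X) (x : X) (ε : ℝ) : Set X := {y | S.br x y = y ∧ dist x y < ε}

def Gs0 (S : SmaleSpace X) : Set (X × X) := {p | p.2 ∈ S.Xs p.1 S.eps}

def Gu0 (S : SmaleSpace X) : Set (X × X) := {p | p.2 ∈ S.Xu p.1 S.eps}

/-- `G_φ^{s,n} = (φ×φ)^{-n}(G_φ^{s,0})`. -/
def GsN (S : SmaleSpace X) (n : ℤ) : Set (X × X) :=
  {p | (hIter S.phi n p.1, hIter S.phi n p.2) ∈ S.Gs0}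

/-- `G_φ^{u,n} = (φ×φ)^{n}(G_φ^{u,0})`. -/
def GuN (S : SmaleSpace X) (n : ℤ) : Set (X × X) :=
  {p | (hIter S.phi (-n) p.1, hIter S.phi (-n) p.2) ∈ S.Gu0}

def GaN (S : SmaleSpace X) (n : ℤ) : Set (X × X) := S.GsN n ∩ S.GuN n

/-- The asymptotic equivalence relation `G_φ^a = ⋃_{n ≥ 0} G_φ^{a,n}`. -/
def Ga (S : SmaleSpace X) : Set (X × X) := ⋃ n : ℕ, S.GaN n

lemma gaN_subset_ga (S : SmaleSpace X) (n : ℕ) : S.GaN n ⊆ S.Ga :=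
  Set.subset_iUnion (fun k : ℕ => S.GaN k) n

/-- The inductive limit topology on `G_φ^a`: a set is open iff its intersection with each
`G_φ^{a,n}` is open in the subspace topology from `X × X`. -/
def gaTopology (S : SmaleSpace X) : TopologicalSpace ↥S.Ga :=
  ⨆ n : ℕ, TopologicalSpace.coinduced (Set.inclusion (S.gaN_subset_ga n)) inferInstance

/-- Irreducibility of a Smale space. -/
def Irreducible (S : SmaleSpace X) : Prop :=
  ∀ U V : Set X, IsOpen U → U.Nonempty → IsOpen V → V.Nonempty →
    ∃ K : ℕ, ((hIter S.phi K '' U) ∩ V).Nonempty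

def IsPeriodicPoint (S : SmaleSpace X) (x : X) : Prop :=
  ∃ p : ℕ, 0 < p ∧ hIter S.phi p x = x

/-- `h` is a flip conjugacy between `(X,φ)` and `(Y,ψ)`. -/
def IsFlipConjugacy (S : SmaleSpace X) (T : SmaleSpace Y) (h : X ≃ₜ Y) : Prop :=
  (∀ x, h (S.phi x) = T.phi (h x)) ∨ (∀ x, h (S.phi x) = T.phi.symm (h x))

def FlipConjugate (S : SmaleSpace X) (T : SmaleSpace Y) : Prop :=
  ∃ h : X ≃ₜ Y, IsFlipConjugacy S T h

/-- An isomorphism of the principal étale groupoids `G_φ^a` and `G_ψ^a`: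
a bijection which is a homeomorphism for the inductive limit topologies and preserves
the (equivalence relation) groupoid structure. -/
structure GaIso (S : SmaleSpace X) (T : SmaleSpace Y) where
  toEquiv : ↥S.Ga ≃ ↥T.Ga
  cont : @Continuous _ _ S.gaTopology T.gaTopology toEquiv
  cont_symm : @Continuous _ _ T.gaTopology S.gaTopology toEquiv.symm
  map_mul : ∀ p q r : ↥S.Ga, (p : X × X).2 = (q : X × X).1 →
    (r : X × X) = ((p : X × X).1, (q : X × X).2) →
    (toEquiv p : Y × Y).2 = (toEquiv q : Y × Y).1 ∧
      (toEquiv r : Y × Y) = ((toEquiv p : Y × Y).1, (toEquiv q : Y × Y).2)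

end SmaleSpace



section AsympAux

variable {X : Type*} [MetricSpace X]

lemma hIter_add' (φ : X ≃ₜ X) (m n : ℤ) (x : X) :
    hIter φ (m + n) x = hIter φ m (hIter φ n x) := by
  simp [hIter, zpow_add, Equiv.Perm.mul_apply]

lemma hIter_zero' (φ : X ≃ₜ X) (x : X) : hIter φ 0 x = x := by
  simp [hIter]

lemma hIter_one' (φ : X ≃ₜ X) (x : X) : hIter φ 1 x = φ x := by
  simp [hIter]

lemma hIter_neg_one' (φ : X ≃ₜ X) (x : X) : hIter φ (-1) x = φ.symm x := by
  simp [hIter, Equiv.Perm.inv_def]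

lemma hIter_symm' (φ : X ≃ₜ X) (n : ℤ) (x : X) :
    hIter φ.symm n x = hIter φ (-n) x := by
  have h : (φ.symm.toEquiv : Equiv.Perm X) = (φ.toEquiv : Equiv.Perm X)⁻¹ := by
    rw [Equiv.Perm.inv_def]; rfl
  simp [hIter, h, inv_zpow, zpow_neg]

lemma continuous_hIter' (φ : X ≃ₜ X) (n : ℤ) : Continuous (hIter φ n) := by
  induction n using Int.induction_on with
  | zero => exact (funext (hIter_zero' φ) : hIter φ 0 = id) ▸ continuous_id
  | succ k ih =>
      have : hIter φ (k + 1) = fun x => hIter φ k (φ x) := by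
        funext x; rw [hIter_add' φ k 1 x, hIter_one']
      rw [this]; exact ih.comp φ.continuous
  | pred k ih =>
      have : hIter φ (-k - 1) = fun x => hIter φ (-k) (φ.symm x) := by
        funext x
        rw [show (-k - 1 : ℤ) = -k + (-1) by ring, hIter_add', hIter_neg_one']
      rw [this]; exact ih.comp φ.symm.continuous

lemma tendsto_int_shift' {g : ℤ → ℝ} (h : Tendsto (fun n : ℕ => g n) atTop (nhds 0)) (m : ℤ) :
    Tendsto (fun n : ℕ => g ((n : ℤ) + m)) atTop (nhds 0) := by
  have h1 : Tendsto (fun n : ℕ => ((n : ℤ) + m).toNat) atTop atTop := by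
    refine tendsto_atTop_atTop.2 fun b => ⟨b + m.natAbs, fun n hn => ?_⟩
    omega
  refine (h.comp h1).congr' ?_
  filter_upwards [eventually_ge_atTop m.natAbs] with n hn
  simp only [Function.comp_apply]
  congr 1
  omega

lemma mem_asympS' (φ : X ≃ₜ X) (a b : X) : (a, b) ∈ asympS φ ↔
    Tendsto (fun n : ℕ => dist (hIter φ n a) (hIter φ n b)) atTop (nhds 0) := Iff.rfl

lemma asympS_refl' (φ : X ≃ₜ X) (a : X) : (a, a) ∈ asympS φ := by
  simp [asympS, tendsto_const_nhds]

lemma asympS_symm' {φ : X ≃ₜ X} {a b : X} (h : (a, b) ∈ asympS φ) : (b, a) ∈ asympS φ := by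
  rw [mem_asympS'] at h ⊢
  simpa [dist_comm] using h

lemma asympS_trans' {φ : X ≃ₜ X} {a b c : X} (h1 : (a, b) ∈ asympS φ)
    (h2 : (b, c) ∈ asympS φ) : (a, c) ∈ asympS φ := by
  rw [mem_asympS'] at h1 h2 ⊢
  refine squeeze_zero (fun n => dist_nonneg) (fun n => dist_triangle _ (hIter φ n b) _) ?_
  simpa using h1.add h2

lemma asympS_shift' {φ : X ≃ₜ X} {a b : X} (h : (a, b) ∈ asympS φ) (m : ℤ) :
    (hIter φ m a, hIter φ m b) ∈ asympS φ := by
  rw [mem_asympS'] at h ⊢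
  have := tendsto_int_shift' (g := fun j : ℤ => dist (hIter φ j a) (hIter φ j b)) h m
  refine this.congr fun n => ?_
  rw [hIter_add', hIter_add']

lemma asympU_eq' (φ : X ≃ₜ X) : asympU φ = asympS φ.symm := by
  ext ⟨a, b⟩
  simp [asympU, asympS, hIter_symm']

lemma limit_periodic' (φ : X ≃ₜ X) (x ys : X) (q : ℤ)
    (hys : Tendsto (fun k : ℕ => hIter φ (q * k) x) atTop (nhds ys)) :
    hIter φ q ys = ys := by
  have h1 : Tendsto (fun k : ℕ => hIter φ q (hIter φ (q * k) x)) atTop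
      (nhds (hIter φ q ys)) := ((continuous_hIter' φ q).tendsto ys).comp hys
  have h2 : (fun k : ℕ => hIter φ q (hIter φ (q * k) x))
      = fun k : ℕ => hIter φ (q * (k + 1 : ℕ)) x := by
    funext k
    rw [← hIter_add']
    congr 1
    push_cast
    ring
  rw [h2] at h1
  have h3 : Tendsto (fun k : ℕ => hIter φ (q * (k + 1 : ℕ)) x) atTop (nhds ys) :=
    hys.comp (tendsto_add_atTop_nat 1)
  exact tendsto_nhds_unique h1 h3

lemma hIter_mul_nat_periodic' (φ : X ≃ₜ X) (ys : X) (q : ℤ) (hq : hIter φ q ys = ys) :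
    ∀ k : ℕ, hIter φ (q * k) ys = ys := by
  intro k
  induction k with
  | zero => simpa using hIter_zero' φ ys
  | succ n ih =>
      have : (q * (n + 1 : ℕ) : ℤ) = q + q * n := by push_cast; ring
      rw [this, hIter_add', ih, hq]

/-- The limit `ys` of `φ^{qk} x` is stably asymptotic to `x`. -/
lemma key_asympS' (φ : X ≃ₜ X) (x ys : X) (q : ℤ) (hq : 0 < q)
    (hys : Tendsto (fun k : ℕ => hIter φ (q * k) x) atTop (nhds ys)) :
    (x, ys) ∈ asympS φ := by
  have hper : hIter φ q ys = ys := limit_periodic' φ x ys q hys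
  set qN : ℕ := q.toNat with hqN
  have hqN0 : 0 < qN := by omega
  set F : X → ℝ := fun z => ∑ r ∈ Finset.range qN, dist (hIter φ r z) (hIter φ r ys) with hF
  have contF : Continuous F :=
    continuous_finset_sum _ fun r _ => (continuous_hIter' φ r).dist continuous_const
  have Fys : F ys = 0 := by simp [hF]
  set zn : ℕ → X := fun n => hIter φ (q * (n / qN : ℕ)) x with hzn
  have hdivtop : Tendsto (fun n : ℕ => n / qN) atTop atTop := by
    refine tendsto_atTop_atTop.2 fun b => ⟨b * qN, fun n hn => ?_⟩
    exact (Nat.le_div_iff_mul_le hqN0).2 hn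
  have hzntop : Tendsto zn atTop (nhds ys) := hys.comp hdivtop
  have bound : ∀ n : ℕ, dist (hIter φ n x) (hIter φ n ys) ≤ F (zn n) := by
    intro n
    set r : ℕ := n % qN with hr
    have hrlt : r < qN := Nat.mod_lt _ hqN0
    have hdm : qN * (n / qN) + r = n := Nat.div_add_mod n qN
    have hqcast : (qN : ℤ) = q := by omega
    have hnat : n = r + qN * (n / qN) := by omega
    have hsplit : (n : ℤ) = (r : ℤ) + q * (n / qN : ℕ) := by
      rw [← hqcast]; exact_mod_cast hnat
    have e1 : hIter φ n x = hIter φ r (zn n) := by rw [hsplit, hIter_add']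
    have e2 : hIter φ n ys = hIter φ r ys := by
      rw [hsplit, hIter_add', hIter_mul_nat_periodic' φ ys q hper]
    rw [e1, e2]
    exact Finset.single_le_sum (f := fun s : ℕ => dist (hIter φ s (zn n)) (hIter φ s ys))
      (fun i _ => dist_nonneg) (Finset.mem_range.2 hrlt)
  rw [mem_asympS']
  refine squeeze_zero (fun n => dist_nonneg) bound ?_
  have := (contF.tendsto ys).comp hzntop
  rwa [Fys] at this

lemma sper_add' {φ : X ≃ₜ X} {a : X} {s t : ℤ} (hs : (hIter φ s a, a) ∈ asympS φ)
    (ht : (hIter φ t a, a) ∈ asympS φ) : (hIter φ (s + t) a, a) ∈ asympS φ := by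
  have h1 : (hIter φ (s + t) a, hIter φ t a) ∈ asympS φ := by
    have := asympS_shift' hs t
    rwa [← hIter_add', add_comm t s] at this
  exact asympS_trans' h1 ht

lemma sper_neg' {φ : X ≃ₜ X} {a : X} {t : ℤ} (ht : (hIter φ t a, a) ∈ asympS φ) :
    (hIter φ (-t) a, a) ∈ asympS φ := by
  have h := asympS_shift' ht (-t)
  rw [← hIter_add', show -t + t = 0 by ring, hIter_zero'] at h
  exact asympS_symm' h

lemma sper_mul' {φ : X ≃ₜ X} {a : X} {t : ℤ} (ht : (hIter φ t a, a) ∈ asympS φ) (k : ℤ) :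
    (hIter φ (t * k) a, a) ∈ asympS φ := by
  induction k using Int.induction_on with
  | zero => rw [mul_zero, hIter_zero']; exact asympS_refl' φ a
  | succ n ih =>
      have := sper_add' ih ht
      rwa [show t * n + t = t * (n + 1) by ring] at this
  | pred n ih =>
      have := sper_add' ih (sper_neg' ht)
      rwa [show t * (-n) + -t = t * (-n - 1) by ring] at this

lemma sper_transfer' {φ : X ≃ₜ X} {a b : X} {t : ℤ} (hab : (a, b) ∈ asympS φ)
    (ht : (hIter φ t b, b) ∈ asympS φ) : (hIter φ t a, a) ∈ asympS φ :=
  asympS_trans' (asympS_trans' (asympS_shift' hab t) ht) (asympS_symm' hab)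

lemma aper_comp' (φ : X ≃ₜ X) (a : X) (t : ℤ) : (hIter φ t a, a) ∈ asympA φ ↔
    ((hIter φ t a, a) ∈ asympS φ ∧ (hIter φ.symm (-t) a, a) ∈ asympS φ.symm) := by
  rw [asympA, Set.mem_inter_iff, asympU_eq', hIter_symm', neg_neg]

lemma aper_add' {φ : X ≃ₜ X} {a : X} {s t : ℤ} (hs : (hIter φ s a, a) ∈ asympA φ)
    (ht : (hIter φ t a, a) ∈ asympA φ) : (hIter φ (s + t) a, a) ∈ asympA φ := by
  rw [aper_comp'] at hs ht ⊢
  refine ⟨sper_add' hs.1 ht.1, ?_⟩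
  have := sper_add' hs.2 ht.2
  rwa [show -s + -t = -(s + t) by ring] at this

lemma aper_mul' {φ : X ≃ₜ X} {a : X} {t : ℤ} (ht : (hIter φ t a, a) ∈ asympA φ) (k : ℤ) :
    (hIter φ (t * k) a, a) ∈ asympA φ := by
  rw [aper_comp'] at ht ⊢
  refine ⟨sper_mul' ht.1 k, ?_⟩
  have := sper_mul' ht.2 k
  rwa [show -t * k = -(t * k) by ring] at this

lemma asympA_refl' (φ : X ≃ₜ X) (a : X) : (a, a) ∈ asympA φ :=
  ⟨asympS_refl' φ a, by rw [asympU_eq']; exact asympS_refl' φ.symm a⟩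

lemma least_dvd' {φ : X ≃ₜ X} {a : X} {d : ℤ}
    (hd : IsLeast {q : ℤ | 0 < q ∧ (hIter φ q a, a) ∈ asympA φ} d)
    {m : ℤ} (hm0 : 0 < m) (hm : (hIter φ m a, a) ∈ asympA φ) : d ∣ m := by
  have hd0 : 0 < d := hd.1.1
  have hrnn : 0 ≤ m % d := Int.emod_nonneg m (by omega)
  have hrlt : m % d < d := Int.emod_lt_of_pos m hd0
  have hrper : (hIter φ (m % d) a, a) ∈ asympA φ := by
    have h1 := aper_mul' hd.1.2 (-(m / d))
    have h2 := aper_add' hm h1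
    rwa [show m + d * -(m / d) = m % d by rw [Int.emod_def]; ring] at h2
  rcases eq_or_lt_of_le hrnn with h | h
  · exact Int.dvd_of_emod_eq_zero h.symm
  · exact absurd (hd.2 ⟨h, hrper⟩) (by omega)

end AsympAux

/-- For an asymptotic `p`-periodic point `x` with `η^s(x) = ys`,
`η^u(x) = yu` of least positive asymptotic periods `p_s`, `p_u`, one has
`(φ^{p_s}(x), x) ∈ G_φ^s`, `(φ^{p_u}(x), x) ∈ G_φ^u`, and if `p` is the least positive
asymptotic period of `x` then `p = lcm(p_u, p_s)`. -/
theorem asymptotic_periods_lcm {X : Type*} [MetricSpace X] [CompactSpace X]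
    (S : SmaleSpace X) (x : X) (p : ℤ) (hp : p ≠ 0)
    (hx : (hIter S.phi p x, x) ∈ asympA S.phi)
    (ys yu : X)
    (hys : Tendsto (fun k : ℕ => hIter S.phi (|p| * k) x) atTop (nhds ys))
    (hyu : Tendsto (fun k : ℕ => hIter S.phi (-(|p| * k)) x) atTop (nhds yu))
    (ps pu : ℤ)
    (hps : IsLeast {q : ℤ | 0 < q ∧ (hIter S.phi q ys, ys) ∈ asympA S.phi} ps)
    (hpu : IsLeast {q : ℤ | 0 < q ∧ (hIter S.phi q yu, yu) ∈ asympA S.phi} pu) :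
    (hIter S.phi ps x, x) ∈ asympS S.phi ∧
    (hIter S.phi pu x, x) ∈ asympU S.phi ∧
    (IsLeast {q : ℤ | 0 < q ∧ (hIter S.phi q x, x) ∈ asympA S.phi} p →
      p = lcm pu ps) := by
  set φ := S.phi with hphi
  have habs : (0 : ℤ) < |p| := abs_pos.mpr hp
  -- stable side
  have hxys : (x, ys) ∈ asympS φ := key_asympS' φ x ys |p| habs hys
  have hpers : hIter φ |p| ys = ys := limit_periodic' φ x ys |p| hys
  -- unstable side via φ.symm
  have hyu2 : Tendsto (fun k : ℕ => hIter φ.symm (|p| * k) x) atTop (nhds yu) :=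
    hyu.congr fun k => (hIter_symm' φ (|p| * k) x).symm
  have hxyu : (x, yu) ∈ asympS φ.symm := key_asympS' φ.symm x yu |p| habs hyu2
  have hperu : hIter φ.symm |p| yu = yu := limit_periodic' φ.symm x yu |p| hyu2
  -- part (i)
  have part1 : (hIter φ ps x, x) ∈ asympS φ := sper_transfer' hxys hps.1.2.1
  -- part (ii)
  have hu1 : (hIter φ.symm (-pu) yu, yu) ∈ asympS φ.symm := by
    rw [hIter_symm', neg_neg]
    have := hpu.1.2.2
    rwa [asympU_eq'] at this
  have hu2 : (hIter φ.symm (-pu) x, x) ∈ asympS φ.symm := sper_transfer' hxyu hu1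
  have part2 : (hIter φ pu x, x) ∈ asympU φ := by
    rw [asympU_eq']
    rwa [hIter_symm', neg_neg] at hu2
  refine ⟨part1, part2, ?_⟩
  -- part (iii)
  intro hl
  have hp0 : (0 : ℤ) < p := hl.1.1
  have hpabs : |p| = p := abs_of_pos hp0
  rw [hpabs] at hpers hperu
  have hps0 : (0 : ℤ) < ps := hps.1.1
  have hpu0 : (0 : ℤ) < pu := hpu.1.1
  -- ps divides p
  have hys_p : (hIter φ p ys, ys) ∈ asympA φ := by
    rw [hpers]; exact asympA_refl' φ ys
  have hps_dvd : ps ∣ p := least_dvd' hps hp0 hys_p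
  -- pu divides p
  have hperu2 : hIter φ p yu = yu := by
    have h1 : hIter φ (-p) yu = yu := by rw [← hIter_symm']; exact hperu
    calc hIter φ p yu = hIter φ p (hIter φ (-p) yu) := by rw [h1]
      _ = hIter φ (p + -p) yu := (hIter_add' φ p (-p) yu).symm
      _ = yu := by rw [show p + -p = 0 by ring, hIter_zero']
  have hyu_p : (hIter φ p yu, yu) ∈ asympA φ := by
    rw [hperu2]; exact asympA_refl' φ yu
  have hpu_dvd : pu ∣ p := least_dvd' hpu hp0 hyu_p
  -- lcm divides p, hence lcm ≤ p
  have hdvd : lcm pu ps ∣ p := lcm_dvd hpu_dvd hps_dvd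
  have hle1 : lcm pu ps ≤ p := Int.le_of_dvd hp0 hdvd
  -- lcm is positive
  have hLnn : (0 : ℤ) ≤ lcm pu ps := by
    rw [← Int.coe_lcm]; exact Int.natCast_nonneg _
  have hLne : lcm pu ps ≠ 0 := by
    intro h
    rw [h] at hdvd
    exact hp (zero_dvd_iff.mp hdvd)
  have hLpos : (0 : ℤ) < lcm pu ps := lt_of_le_of_ne hLnn (Ne.symm hLne)
  -- lcm is an asymptotic period of x
  obtain ⟨c, hc⟩ : ps ∣ lcm pu ps := dvd_lcm_right pu ps
  obtain ⟨c', hc'⟩ : pu ∣ lcm pu ps := dvd_lcm_left pu ps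
  have hSL : (hIter φ (lcm pu ps) x, x) ∈ asympS φ := by
    rw [hc]; exact sper_mul' part1 c
  have hUL : (hIter φ (lcm pu ps) x, x) ∈ asympU φ := by
    rw [asympU_eq']
    have := sper_mul' hu2 c'
    rw [show -pu * c' = -(pu * c') by ring, ← hc'] at this
    rwa [hIter_symm', neg_neg] at this
  have hmem : lcm pu ps ∈ {q : ℤ | 0 < q ∧ (hIter φ q x, x) ∈ asympA φ} :=
    ⟨hLpos, hSL, hUL⟩
  have hle2 : p ≤ lcm pu ps := hl.2 hmem
  omega
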